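/- Let n, m ≥ 1, let x, x' ∈ ℝⁿ with H(x,x') ≤ 1 and y, y' ∈ ℝᵐ with H(y,y') ≤ 1 (each sample changes in at most one coordinate). Then the two-sample Kuiper statistic satisfies |d_K(F̂_x, F̂_y) − d_K(F̂_{x'}, F̂_{y'})| ≤ 1/n + 1/m. -/

import Mathlib

open Filter

/-- Empirical cdf of a sample `x : Fin n → ℝ`. -/
noncomputable def ecdf {n : ℕ} (x : Fin n → ℝ) (t : ℝ) : ℝ :=
  (Finset.univ.filter (fun i => x i ≤ t)).card / n

/-- Kuiper distance. -/
noncomputable def dK (F G : ℝ → ℝ) : ℝ :=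
  (⨆ t : ℝ, (F t - G t)) + (⨆ s : ℝ, (G s - F s))

lemma ecdf_nonneg {n : ℕ} (x : Fin n → ℝ) (t : ℝ) : 0 ≤ ecdf x t := by
  unfold ecdf; positivity

lemma ecdf_le_one {n : ℕ} (x : Fin n → ℝ) (t : ℝ) : ecdf x t ≤ 1 := by
  unfold ecdf
  rcases Nat.eq_zero_or_pos n with h | h
  · subst h; simp
  · rw [div_le_one (by exact_mod_cast h)]
    exact_mod_cast (Finset.card_filter_le _ _).trans (by simp)

lemma bdd_ecdf_sub {n m : ℕ} (a : Fin n → ℝ) (b : Fin m → ℝ) :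
    BddAbove (Set.range fun t => ecdf a t - ecdf b t) := by
  refine ⟨1, ?_⟩
  rintro _ ⟨t, rfl⟩
  have := ecdf_le_one a t
  have := ecdf_nonneg b t
  simp only
  linarith

lemma key_aux {n : ℕ} (hn : 1 ≤ n) (x x' : Fin n → ℝ) (k : Fin n)
    (hk : ∀ i, x i ≠ x' i → i = k) (hle : x k ≤ x' k) :
    (⨆ t : ℝ, ecdf x t - ecdf x' t) + (⨆ t : ℝ, ecdf x' t - ecdf x t) ≤ 1 / n := by
  have hnpos : (0:ℝ) < n := by exact_mod_cast hn
  have hsub : ∀ t : ℝ, (Finset.univ.filter (fun i => x' i ≤ t)) ⊆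
      (Finset.univ.filter (fun i => x i ≤ t)) := by
    intro t i hi
    simp only [Finset.mem_filter, Finset.mem_univ, true_and] at hi ⊢
    by_cases h : x i = x' i
    · rw [h]; exact hi
    · rw [hk i h]
      have : i = k := hk i h
      rw [this] at hi
      linarith
  have hcard : ∀ t : ℝ, (Finset.univ.filter (fun i => x i ≤ t)).card ≤
      (Finset.univ.filter (fun i => x' i ≤ t)).card + 1 := by
    intro t
    have : (Finset.univ.filter (fun i => x i ≤ t)) ⊆
        insert k (Finset.univ.filter (fun i => x' i ≤ t)) := by
      intro i hi
      simp only [Finset.mem_filter, Finset.mem_univ, true_and, Finset.mem_insert] at hi ⊢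
      by_cases h : x i = x' i
      · right; rwa [← h]
      · left; exact hk i h
    calc (Finset.univ.filter (fun i => x i ≤ t)).card
        ≤ (insert k (Finset.univ.filter (fun i => x' i ≤ t))).card := Finset.card_le_card this
      _ ≤ _ := Finset.card_insert_le _ _
  have h1 : ∀ t : ℝ, ecdf x' t ≤ ecdf x t := by
    intro t
    unfold ecdf
    have hc : ((Finset.univ.filter (fun i => x' i ≤ t)).card : ℝ) ≤
        ((Finset.univ.filter (fun i => x i ≤ t)).card : ℝ) := by
      exact_mod_cast Finset.card_le_card (hsub t)
    exact div_le_div_of_nonneg_right hc hnpos.le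
  have h2 : ∀ t : ℝ, ecdf x t ≤ ecdf x' t + 1 / n := by
    intro t
    unfold ecdf
    rw [← add_div]
    gcongr
    exact_mod_cast hcard t
  have s1 : (⨆ t : ℝ, ecdf x t - ecdf x' t) ≤ 1 / n :=
    ciSup_le fun t => by linarith [h2 t]
  have s2 : (⨆ t : ℝ, ecdf x' t - ecdf x t) ≤ 0 :=
    ciSup_le fun t => by linarith [h1 t]
  linarith

lemma key {n : ℕ} (hn : 1 ≤ n) (x x' : Fin n → ℝ) (hx : hammingDist x x' ≤ 1) :
    (⨆ t : ℝ, ecdf x t - ecdf x' t) + (⨆ t : ℝ, ecdf x' t - ecdf x t) ≤ 1 / n := by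
  have hcard : (Finset.univ.filter (fun i => x i ≠ x' i)).card ≤ 1 := hx
  obtain ⟨k, hk⟩ : ∃ k : Fin n, ∀ i, x i ≠ x' i → i = k := by
    rcases (Finset.univ.filter (fun i => x i ≠ x' i)).eq_empty_or_nonempty with h | ⟨k, hkmem⟩
    · refine ⟨⟨0, hn⟩, fun i hi => ?_⟩
      have hmem : i ∈ Finset.univ.filter (fun i => x i ≠ x' i) :=
        Finset.mem_filter.mpr ⟨Finset.mem_univ _, hi⟩
      rw [h] at hmem
      exact absurd hmem (Finset.notMem_empty i)
    · refine ⟨k, fun i hi => ?_⟩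
      exact Finset.card_le_one.mp hcard i
        (Finset.mem_filter.mpr ⟨Finset.mem_univ _, hi⟩) k hkmem
  rcases le_total (x k) (x' k) with h | h
  · exact key_aux hn x x' k hk h
  · rw [add_comm]
    exact key_aux hn x' x k (fun i hi => hk i (Ne.symm hi)) h

lemma dK_diff_le {n m : ℕ} (hn : 1 ≤ n) (hm : 1 ≤ m)
    (x x' : Fin n → ℝ) (y y' : Fin m → ℝ)
    (hx : hammingDist x x' ≤ 1) (hy : hammingDist y y' ≤ 1) :
    dK (ecdf x) (ecdf y) - dK (ecdf x') (ecdf y') ≤ 1 / n + 1 / m := by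
  have hA : (⨆ t : ℝ, ecdf x t - ecdf y t) ≤ (⨆ t : ℝ, ecdf x' t - ecdf y' t) +
      ((⨆ t : ℝ, ecdf x t - ecdf x' t) + (⨆ t : ℝ, ecdf y' t - ecdf y t)) := by
    refine ciSup_le fun t => ?_
    have b1 := le_ciSup (bdd_ecdf_sub x' y') t
    have b2 := le_ciSup (bdd_ecdf_sub x x') t
    have b3 := le_ciSup (bdd_ecdf_sub y' y) t
    linarith
  have hB : (⨆ t : ℝ, ecdf y t - ecdf x t) ≤ (⨆ t : ℝ, ecdf y' t - ecdf x' t) +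
      ((⨆ t : ℝ, ecdf x' t - ecdf x t) + (⨆ t : ℝ, ecdf y t - ecdf y' t)) := by
    refine ciSup_le fun t => ?_
    have b1 := le_ciSup (bdd_ecdf_sub y' x') t
    have b2 := le_ciSup (bdd_ecdf_sub x' x) t
    have b3 := le_ciSup (bdd_ecdf_sub y y') t
    linarith
  have kx := key hn x x' hx
  have ky := key hm y y' hy
  unfold dK
  linarith

theorem twoSample_Kuiper_sensitivity_max_metric {n m : ℕ} (hn : 1 ≤ n) (hm : 1 ≤ m)
    (x x' : Fin n → ℝ) (y y' : Fin m → ℝ)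
    (hx : hammingDist x x' ≤ 1) (hy : hammingDist y y' ≤ 1) :
    |dK (ecdf x) (ecdf y) - dK (ecdf x') (ecdf y')| ≤ 1 / n + 1 / m := by
  rw [abs_sub_le_iff]
  constructor
  · exact dK_diff_le hn hm x x' y y' hx hy
  · exact dK_diff_le hn hm x' x y' y (by rwa [hammingDist_comm]) (by rwa [hammingDist_comm])
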